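/- The correspondence q^∞ ↦ p between infinite consistent arrays with q(2:1) > 0 (satisfying the backward recursions) and the EPPFs solving Möhle's recursion for all n is injective: if two such arrays q and q' yield the same EPPF p, then q = q'. -/

import Mathlib

open scoped Classical

/-- `d(n;k₁,…,k_r;s) = n!/(s!·∏_{j=2}^n (j!)^{l_j} l_j!)`, `l_j = #{i : kᵢ = j}`. -/
noncomputable def dCoef (n : ℕ) (K : Multiset ℕ) (s : ℕ) : ℝ :=
  (Nat.factorial n : ℝ) /
    ((Nat.factorial s : ℝ) *
      ∏ j ∈ Finset.Icc 2 n,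
        (Nat.factorial j : ℝ) ^ (K.count j) * (Nat.factorial (K.count j) : ℝ))

/-- The (finite) collection of multisets `{k₁,…,k_r}` with `r ≥ 1`, all `kᵢ ≥ 2` and
`∑ kᵢ ≤ n`, indexing the collision entries `q(n:k₁,…,k_r;s)` (`s = n - ∑ kᵢ`). -/
def collisionSets (n : ℕ) : Finset (Multiset ℕ) :=
  (((Finset.Icc 2 n).val.bind fun j => Multiset.replicate n j).powerset.toFinset).filter
    fun K => K ≠ 0 ∧ (∀ k ∈ K, 2 ≤ k) ∧ K.sum ≤ n

/-- Admissible allocations `η = (η₁,…,η_ℓ)` of the multiset `K = {k₁,…,k_r}` to the parts of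
the composition `L = (n₁,…,n_ℓ)`: part `i` receives the sub-multiset `η i` and
`∑_{k ∈ η i} k ≤ nᵢ`. -/
def allocations (K : Multiset ℕ) (L : List ℕ) : Finset (Fin L.length → Multiset ℕ) :=
  (Fintype.piFinset fun _ : Fin L.length => K.powerset.toFinset).filter
    fun η => (∑ i, η i) = K ∧ ∀ i, (η i).sum ≤ L.get i

/-- The right-hand side of Möhle's recursion (generalrec1) for the composition
`L = (n₁,…,n_ℓ)` of `n = ∑ nᵢ`, with coefficients `q1 n = q(n:1)` and
`qc n K = q(n:k₁,…,k_r; n-∑kᵢ)`. -/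
noncomputable def moehleRHS (q1 : ℕ → ℝ) (qc : ℕ → Multiset ℕ → ℝ)
    (p : List ℕ → ℝ) (L : List ℕ) : ℝ :=
  q1 L.sum / (L.sum : ℝ) *
      ∑ j ∈ Finset.range L.length, (if L.getD j 0 = 1 then p (L.eraseIdx j) else 0)
    + ∑ K ∈ collisionSets L.sum, qc L.sum K *
        ∑ η ∈ allocations K L,
          ((∏ i : Fin L.length, dCoef (L.get i) (η i) (L.get i - (η i).sum)) /
              dCoef L.sum K (L.sum - K.sum)) *
            p (List.ofFn fun i : Fin L.length => L.get i - (η i).sum + (η i).card)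

/-- Möhle's recursion (generalrec1) at the composition `L`. -/
noncomputable def MoehleRec (q1 : ℕ → ℝ) (qc : ℕ → Multiset ℕ → ℝ)
    (p : List ℕ → ℝ) (L : List ℕ) : Prop :=
  p L = moehleRHS q1 qc p L

/-- The backward consistency recursions (generalqrec1) and (generalqrec1b) for an infinite
array of probability vectors, written with `qc b K = q(b:k₁,…,k_r;s)` (`s = b - ∑kᵢ`),
the multiset `K` being given through a list `L = (k₁,…,k_r)`. -/
def GeneralQRec (q1 : ℕ → ℝ) (qc : ℕ → Multiset ℕ → ℝ) : Prop :=
  (∀ b : ℕ, 1 ≤ b →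
    q1 b = ((b : ℝ) / ((b : ℝ) + 1)) * q1 (b + 1)
      + (1 / ((b : ℝ) + 1)) * q1 (b + 1) * q1 b
      + (2 / ((b : ℝ) + 1)) * qc (b + 1) {2} * q1 b) ∧
  ∀ (b s : ℕ) (L : List ℕ), (∀ k ∈ L, 2 ≤ k) → L ≠ [] → s + L.sum = b →
    qc b (↑L) =
      (∑ i ∈ Finset.range L.length,
        ((((L.getD i 0 : ℝ) + 1) * ((L.count (L.getD i 0 + 1) : ℝ) + 1)) /
            (((b : ℝ) + 1) * (L.count (L.getD i 0) : ℝ))) *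
          qc (b + 1) (↑(L.set i (L.getD i 0 + 1))))
      + (if s = 0 then 0 else
          (2 * ((L.count 2 : ℝ) + 1) / ((b : ℝ) + 1)) *
            qc (b + 1) ((L ++ [2] : List ℕ) : Multiset ℕ))
      + (((s : ℝ) + 1) / ((b : ℝ) + 1)) * qc (b + 1) (↑L)
      + (1 / ((b : ℝ) + 1)) * q1 (b + 1) * qc b (↑L)
      + (2 / ((b : ℝ) + 1)) * qc (b + 1) {2} * qc b (↑L)

lemma dCoef_pos (n : ℕ) (K : Multiset ℕ) (s : ℕ) : 0 < dCoef n K s := by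
  unfold dCoef
  apply div_pos
  · exact_mod_cast Nat.factorial_pos n
  · apply mul_pos
    · exact_mod_cast Nat.factorial_pos s
    · apply Finset.prod_pos
      intro j _
      apply mul_pos
      · apply pow_pos; exact_mod_cast Nat.factorial_pos j
      · exact_mod_cast Nat.factorial_pos _

private lemma card_le_msum {K : Multiset ℕ} (h : ∀ k ∈ K, 1 ≤ k) : Multiset.card K ≤ K.sum := by
  simpa using Multiset.card_nsmul_le_sum h

private lemma two_le_msum {K : Multiset ℕ} (h0 : K ≠ 0) (h2 : ∀ k ∈ K, 2 ≤ k) : 2 ≤ K.sum := by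
  obtain ⟨x, hx⟩ := Multiset.exists_mem_of_ne_zero h0
  exact le_trans (h2 x hx) (Multiset.le_sum_of_mem hx)

lemma mem_collisionSets {n : ℕ} {K : Multiset ℕ} :
    K ∈ collisionSets n ↔ K ≠ 0 ∧ (∀ k ∈ K, 2 ≤ k) ∧ K.sum ≤ n := by
  unfold collisionSets
  rw [Finset.mem_filter]
  constructor
  · rintro ⟨-, h⟩; exact h
  · rintro ⟨h0, h2, hn⟩
    refine ⟨?_, h0, h2, hn⟩
    rw [Multiset.mem_toFinset, Multiset.mem_powerset, Multiset.le_iff_count]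
    intro j
    by_cases hj : j ∈ K
    · have h2j : 2 ≤ j := h2 j hj
      have hjn : j ≤ n := le_trans (Multiset.le_sum_of_mem hj) hn
      have hcount : Multiset.count j (((Finset.Icc 2 n).val).bind fun i => Multiset.replicate n i) = n := by
        rw [Multiset.count_bind]
        rw [show ((Finset.Icc 2 n).val.map fun i => Multiset.count j (Multiset.replicate n i))
            = (Finset.Icc 2 n).val.map (fun i => if i = j then n else 0) from by
          congr 1; funext i; exact Multiset.count_replicate j i n]
        rw [← Finset.sum_eq_multiset_sum, Finset.sum_ite_eq' (Finset.Icc 2 n) j (fun _ => n)]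
        simp [Finset.mem_Icc, h2j, hjn]
      rw [hcount]
      calc Multiset.count j K ≤ Multiset.card K := Multiset.count_le_card _ _
        _ ≤ K.sum := card_le_msum (fun k hk => le_trans one_le_two (h2 k hk))
        _ ≤ n := hn
    · simp [Multiset.count_eq_zero_of_notMem hj]

lemma mem_allocations {K : Multiset ℕ} {L : List ℕ} {η : Fin L.length → Multiset ℕ} :
    η ∈ allocations K L ↔ (∑ i, η i) = K ∧ ∀ i, (η i).sum ≤ L.get i := by
  unfold allocations
  rw [Finset.mem_filter, and_iff_right_iff_imp]
  rintro ⟨hs, -⟩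
  rw [Fintype.mem_piFinset]
  intro a
  rw [Multiset.mem_toFinset, Multiset.mem_powerset, ← hs]
  exact Finset.single_le_sum (f := fun i => η i) (fun i _ => Multiset.zero_le _) (Finset.mem_univ a)

private lemma msum_sum {ι : Type*} (s : Finset ι) (f : ι → Multiset ℕ) :
    (∑ i ∈ s, f i).sum = ∑ i ∈ s, (f i).sum := by
  classical
  induction s using Finset.induction_on with
  | empty => simp
  | insert _ _ h ih => rw [Finset.sum_insert h, Finset.sum_insert h, Multiset.sum_add, ih]

private lemma mcard_sum {ι : Type*} (s : Finset ι) (f : ι → Multiset ℕ) :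
    Multiset.card (∑ i ∈ s, f i) = ∑ i ∈ s, Multiset.card (f i) := by
  classical
  induction s using Finset.induction_on with
  | empty => simp
  | insert _ _ h ih => rw [Finset.sum_insert h, Finset.sum_insert h, Multiset.card_add, ih]

private lemma sum_singleton_getD (l : List ℕ) :
    ∑ j ∈ Finset.range l.length, ({l.getD j 0} : Multiset ℕ) = (l : Multiset ℕ) := by
  induction l with
  | nil => simp
  | cons a l ih =>
      rw [List.length_cons, Finset.sum_range_succ']
      simp only [List.getD_cons_succ, List.getD_cons_zero, ih]
      rw [← Multiset.cons_coe, ← Multiset.singleton_add, add_comm]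

private lemma sum_getD (l : List ℕ) :
    ∑ j ∈ Finset.range l.length, l.getD j 0 = l.sum := by
  have h := congrArg Multiset.sum (sum_singleton_getD l)
  rw [msum_sum] at h
  simpa using h

private lemma alloc_replicate_empty {n : ℕ} {K : Multiset ℕ} (hK : K ∈ collisionSets n) :
    allocations K (List.replicate n 1) = ∅ := by
  obtain ⟨h0, h2, -⟩ := mem_collisionSets.1 hK
  apply Finset.eq_empty_of_forall_notMem
  intro η hη
  obtain ⟨hsum, hle⟩ := mem_allocations.1 hη
  have hex : ∃ i, η i ≠ 0 := by
    by_contra hc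
    push_neg at hc
    apply h0
    rw [← hsum]
    exact Finset.sum_eq_zero fun i _ => hc i
  obtain ⟨i, hi⟩ := hex
  obtain ⟨x, hx⟩ := Multiset.exists_mem_of_ne_zero hi
  have hxK : x ∈ K := by
    rw [← hsum]
    exact Multiset.mem_of_le
      (Finset.single_le_sum (f := fun i => η i) (fun i _ => Multiset.zero_le _) (Finset.mem_univ i)) hx
  have h2x : 2 ≤ x := h2 x hxK
  have : (2 : ℕ) ≤ (η i).sum := le_trans h2x (Multiset.le_sum_of_mem hx)
  have hgi : (List.replicate n 1).get i = 1 := by simp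
  have := le_trans this (hle i)
  omega

private lemma p_replicate_step {q1 : ℕ → ℝ} {qc : ℕ → Multiset ℕ → ℝ} {p : List ℕ → ℝ}
    (hM : ∀ L : List ℕ, (∀ x ∈ L, 1 ≤ x) → L ≠ [] → MoehleRec q1 qc p L)
    {n : ℕ} (hn : 1 ≤ n) :
    p (List.replicate n 1) = q1 n * p (List.replicate (n - 1) 1) := by
  have h := hM (List.replicate n 1)
    (fun x hx => by rw [List.eq_of_mem_replicate hx])
    (by simp only [ne_eq, List.replicate_eq_nil_iff]; omega)
  rw [MoehleRec, moehleRHS] at h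
  have hsum : (List.replicate n 1).sum = n := by simp
  have hlen : (List.replicate n 1).length = n := List.length_replicate
  rw [hsum] at h
  have hc : (∑ K ∈ collisionSets n, qc n K *
        ∑ η ∈ allocations K (List.replicate n 1),
          ((∏ i : Fin (List.replicate n 1).length,
              dCoef ((List.replicate n 1).get i) (η i) ((List.replicate n 1).get i - (η i).sum)) /
              dCoef n K (n - K.sum)) *
            p (List.ofFn fun i => (List.replicate n 1).get i - (η i).sum + Multiset.card (η i))) = 0 :=
    Finset.sum_eq_zero fun K hK => by rw [alloc_replicate_empty hK, Finset.sum_empty, mul_zero]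
  rw [hc, add_zero] at h
  rw [hlen] at h
  rw [show (∑ j ∈ Finset.range n,
      if (List.replicate n 1).getD j 0 = 1 then p ((List.replicate n 1).eraseIdx j) else 0)
      = ∑ _j ∈ Finset.range n, p (List.replicate (n - 1) 1) from
    Finset.sum_congr rfl (fun j hj => by
      rw [Finset.mem_range] at hj
      have h1 : (List.replicate n 1).getD j 0 = 1 := by
        rw [List.getD_eq_getElem _ _ (by simpa using hj)]
        simp
      have h2 : (List.replicate n 1).eraseIdx j = List.replicate (n - 1) 1 := by
        apply List.eq_replicate_iff.2
        constructor
        · rw [List.length_eraseIdx_of_lt (by simpa using hj)]; simp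
        · intro b hb
          exact List.eq_of_mem_replicate ((List.eraseIdx_sublist _ j).mem hb)
      rw [h1, h2, if_pos rfl])] at h
  rw [Finset.sum_const, Finset.card_range, nsmul_eq_mul] at h
  rw [h]
  have hn' : (n : ℝ) ≠ 0 := by positivity  -- wrong: n could be... n ≥ 1 so fine
  field_simp

private lemma qc2_le_one {q1 : ℕ → ℝ} {qc : ℕ → Multiset ℕ → ℝ}
    (hq1 : ∀ n, 0 ≤ q1 n ∧ q1 n ≤ 1) (hqc : ∀ n K, 0 ≤ qc n K)
    (hqsum : ∀ n : ℕ, 1 ≤ n → q1 n + ∑ K ∈ collisionSets n, qc n K = 1)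
    {m : ℕ} (hm : 2 ≤ m) : qc m {2} ≤ 1 := by
  have hmem : ({2} : Multiset ℕ) ∈ collisionSets m := by
    rw [mem_collisionSets]
    refine ⟨by simp, ?_, by simpa using hm⟩
    intro k hk
    rw [Multiset.mem_singleton] at hk
    omega
  have h1 := hqsum m (by omega)
  have h2 : qc m {2} ≤ ∑ K ∈ collisionSets m, qc m K :=
    Finset.single_le_sum (fun K _ => hqc m K) hmem
  have := (hq1 m).1
  linarith

private lemma q1_pos {q1 : ℕ → ℝ} {qc : ℕ → Multiset ℕ → ℝ}
    (hq1 : ∀ n, 0 ≤ q1 n ∧ q1 n ≤ 1) (hqc : ∀ n K, 0 ≤ qc n K)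
    (hqsum : ∀ n : ℕ, 1 ≤ n → q1 n + ∑ K ∈ collisionSets n, qc n K = 1)
    (hcons : GeneralQRec q1 qc) (hq21 : 0 < q1 2) :
    ∀ n : ℕ, 2 ≤ n → 0 < q1 n := by
  intro n hn
  induction n, hn using Nat.le_induction with
  | base => exact hq21
  | succ n hn ih =>
      rcases lt_or_eq_of_le (hq1 (n + 1)).1 with h | h
      · exact h
      · exfalso
        have hrec := hcons.1 n (by omega)
        rw [← h] at hrec
        have hq2le : qc (n + 1) {2} ≤ 1 := qc2_le_one hq1 hqc hqsum (by omega)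
        have hq2ge : 0 ≤ qc (n + 1) {2} := hqc _ _
        have hnr : (2 : ℝ) ≤ (n : ℝ) := by exact_mod_cast hn
        have hd : (0:ℝ) < (n : ℝ) + 1 := by linarith
        field_simp at hrec
        nlinarith [mul_le_mul_of_nonneg_right hq2le ih.le,
          mul_le_mul_of_nonneg_right hnr ih.le]

private lemma p_repl_pos {q1 : ℕ → ℝ} {qc : ℕ → Multiset ℕ → ℝ} {p : List ℕ → ℝ}
    (hq1 : ∀ n, 0 ≤ q1 n ∧ q1 n ≤ 1) (hqc : ∀ n K, 0 ≤ qc n K)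
    (hqsum : ∀ n : ℕ, 1 ≤ n → q1 n + ∑ K ∈ collisionSets n, qc n K = 1)
    (hcons : GeneralQRec q1 qc) (hq21 : 0 < q1 2)
    (hnn : ∀ L : List ℕ, 0 ≤ p L) (hone : p [1] = 1)
    (hM : ∀ L : List ℕ, (∀ x ∈ L, 1 ≤ x) → L ≠ [] → MoehleRec q1 qc p L) :
    ∀ m : ℕ, 0 < p (List.replicate m 1) := by
  have hnil : (1 : ℝ) = q1 1 * p [] := by
    have h := p_replicate_step hM (n := 1) le_rfl
    simpa [hone] using h
  have hpnil : 0 < p [] := by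
    rcases lt_or_eq_of_le (hnn []) with h | h
    · exact h
    · exfalso; rw [← h, mul_zero] at hnil; norm_num at hnil
  intro m
  induction m with
  | zero => simpa using hpnil
  | succ m ih =>
      rw [p_replicate_step hM (n := m + 1) (by omega)]
      simp only [Nat.add_sub_cancel]
      apply mul_pos _ ih
      rcases Nat.lt_or_ge m 1 with hm | hm
      · interval_cases m
        · rcases lt_or_eq_of_le (hq1 1).1 with h | h
          · exact h
          · exfalso; rw [← h, zero_mul] at hnil; norm_num at hnil
      · exact q1_pos hq1 hqc hqsum hcons hq21 (m + 1) (by omega)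

private lemma q1_eq {q1 q1' : ℕ → ℝ} {qc qc' : ℕ → Multiset ℕ → ℝ} {p : List ℕ → ℝ}
    (hq1 : ∀ n, 0 ≤ q1 n ∧ q1 n ≤ 1) (hqc : ∀ n K, 0 ≤ qc n K)
    (hqsum : ∀ n : ℕ, 1 ≤ n → q1 n + ∑ K ∈ collisionSets n, qc n K = 1)
    (hcons : GeneralQRec q1 qc) (hq21 : 0 < q1 2)
    (hnn : ∀ L : List ℕ, 0 ≤ p L) (hone : p [1] = 1)
    (hM : ∀ L : List ℕ, (∀ x ∈ L, 1 ≤ x) → L ≠ [] → MoehleRec q1 qc p L)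
    (hM' : ∀ L : List ℕ, (∀ x ∈ L, 1 ≤ x) → L ≠ [] → MoehleRec q1' qc' p L) :
    ∀ n : ℕ, 1 ≤ n → q1 n = q1' n := by
  intro n hn
  have h1 := p_replicate_step hM (n := n) hn
  have h2 := p_replicate_step hM' (n := n) hn
  have hpos := p_repl_pos hq1 hqc hqsum hcons hq21 hnn hone hM (n - 1)
  rw [h1] at h2
  exact mul_right_cancel₀ (ne_of_gt hpos) h2

private lemma get_append_lt (T R : List ℕ) (i : Fin (T ++ R).length) (hi : (i : ℕ) < T.length) :
    (T ++ R).get i = T.getD (i : ℕ) 0 := by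
  rw [List.get_eq_getElem, List.getElem_append_left hi, List.getD_eq_getElem _ _ hi]

private lemma get_append_ge (T : List ℕ) (t : ℕ) (i : Fin (T ++ List.replicate t 1).length)
    (hi : T.length ≤ (i : ℕ)) : (T ++ List.replicate t 1).get i = 1 := by
  rw [List.get_eq_getElem, List.getElem_append_right hi]
  exact List.getElem_replicate ..

private lemma getD_mem_of_lt (T : List ℕ) (j : ℕ) (hj : j < T.length) : T.getD j 0 ∈ T := by
  rw [List.getD_eq_getElem _ _ hj]
  exact List.getElem_mem _

noncomputable def innerS (p : List ℕ → ℝ) (n : ℕ) (L : List ℕ) (K' : Multiset ℕ) : ℝ :=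
  ∑ η ∈ allocations K' L,
    ((∏ i : Fin L.length, dCoef (L.get i) (η i) (L.get i - (η i).sum)) /
        dCoef n K' (n - K'.sum)) *
      p (List.ofFn fun i : Fin L.length => L.get i - (η i).sum + (η i).card)

private lemma qc_eq {q1 q1' : ℕ → ℝ} {qc qc' : ℕ → Multiset ℕ → ℝ} {p : List ℕ → ℝ}
    (hnn : ∀ L : List ℕ, 0 ≤ p L)
    (hq1eq : ∀ n : ℕ, 1 ≤ n → q1 n = q1' n)
    (hppos : ∀ m : ℕ, 0 < p (List.replicate m 1))
    (hM : ∀ L : List ℕ, (∀ x ∈ L, 1 ≤ x) → L ≠ [] → MoehleRec q1 qc p L)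
    (hM' : ∀ L : List ℕ, (∀ x ∈ L, 1 ≤ x) → L ≠ [] → MoehleRec q1' qc' p L) :
    ∀ (n : ℕ) (K : Multiset ℕ), K ≠ 0 → (∀ k ∈ K, 2 ≤ k) → K.sum ≤ n →
      qc n K = qc' n K := by
  intro n
  suffices H : ∀ (m : ℕ) (K : Multiset ℕ), (n + 2) * K.sum - Multiset.card K ≤ m →
      K ≠ 0 → (∀ k ∈ K, 2 ≤ k) → K.sum ≤ n → qc n K = qc' n K from
    fun K h1 h2 h3 => H _ K le_rfl h1 h2 h3
  intro m
  induction m using Nat.strong_induction_on with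
  | _ m IH =>
  intro K hmK hK0 hK2 hKn
  -- set up the composition L = (k₁,…,k_r,1,…,1)
  set T : List ℕ := K.toList with hT
  set r : ℕ := T.length with hrdef
  set t : ℕ := n - K.sum with htdef
  set L : List ℕ := T ++ List.replicate t 1 with hL
  have hT2 : ∀ k ∈ T, 2 ≤ k := fun k hk => hK2 k (by rwa [hT, Multiset.mem_toList] at hk)
  have hTK : (T : Multiset ℕ) = K := by rw [hT]; exact Multiset.coe_toList K
  have hTne : T ≠ [] := by
    intro hc
    apply hK0
    rw [← hTK, hc]; rfl
  have hσ2 : 2 ≤ K.sum := two_le_msum hK0 hK2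
  have hr : r = Multiset.card K := by rw [hrdef, hT]; exact Multiset.length_toList K
  have hrσ : r ≤ K.sum := by
    rw [hr]
    exact card_le_msum (fun k hk => by have := hK2 k hk; omega)
  have hTsum : T.sum = K.sum := by rw [hT]; exact Multiset.sum_toList K
  have hL1 : ∀ x ∈ L, 1 ≤ x := by
    intro x hx
    rcases List.mem_append.1 hx with hx | hx
    · have := hT2 x hx; omega
    · rw [List.eq_of_mem_replicate hx]
  have hLne : L ≠ [] := by
    rw [hL]
    intro hc
    exact hTne (List.append_eq_nil_iff.1 hc).1
  have hLsum : L.sum = n := by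
    rw [hL, List.sum_append, hTsum, List.sum_replicate, smul_eq_mul, mul_one, htdef]
    omega
  have hLlen : L.length = r + t := by
    rw [hL, List.length_append, List.length_replicate, hrdef]
  have hgetlt : ∀ (i : Fin L.length) (hi : (i : ℕ) < r), L.get i = T.getD (i : ℕ) 0 :=
    fun i hi => get_append_lt T (List.replicate t 1) i hi
  have hgetge : ∀ (i : Fin L.length), r ≤ (i : ℕ) → L.get i = 1 :=
    fun i hi => get_append_ge T t i hi
  have hT2' : ∀ j, j < r → 2 ≤ T.getD j 0 := fun j hj => hT2 _ (getD_mem_of_lt T j hj)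
  -- the canonical allocation of K to L
  set η₀ : Fin L.length → Multiset ℕ :=
    fun i => if (i : ℕ) < r then ({T.getD (i : ℕ) 0} : Multiset ℕ) else 0 with hη₀
  have hη₀K : (∑ i, η₀ i) = K := by
    rw [hη₀]
    rw [Fin.sum_univ_eq_sum_range
      (fun j => if j < r then ({T.getD j 0} : Multiset ℕ) else 0) L.length]
    rw [hLlen, Finset.sum_range_add]
    have hz : (∑ j ∈ Finset.range t,
        if r + j < r then ({T.getD (r + j) 0} : Multiset ℕ) else 0) = 0 :=
      Finset.sum_eq_zero fun j _ => if_neg (by omega)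
    rw [hz, add_zero]
    have hone : (∑ j ∈ Finset.range r, if j < r then ({T.getD j 0} : Multiset ℕ) else 0)
        = ∑ j ∈ Finset.range r, ({T.getD j 0} : Multiset ℕ) :=
      Finset.sum_congr rfl fun j hj => if_pos (Finset.mem_range.1 hj)
    rw [hone, hrdef, sum_singleton_getD T, hTK]
  have hη₀mem : η₀ ∈ allocations K L := by
    rw [mem_allocations]
    refine ⟨hη₀K, ?_⟩
    intro i
    by_cases hi : (i : ℕ) < r
    · rw [hη₀]; simp only [if_pos hi, Multiset.sum_singleton]
      rw [hgetlt i hi]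
    · rw [hη₀]; simp only [if_neg hi, Multiset.sum_zero]
      rw [hgetge i (le_of_not_gt hi)]
      omega
  have harg₀ : (List.ofFn fun i : Fin L.length => L.get i - (η₀ i).sum + (η₀ i).card)
      = List.replicate L.length 1 := by
    apply List.eq_replicate_iff.2
    refine ⟨by simp, ?_⟩
    intro b hb
    rw [List.mem_ofFn] at hb
    obtain ⟨i, hi⟩ := hb
    rw [← hi]
    by_cases h : (i : ℕ) < r
    · rw [hη₀]; simp only [if_pos h, Multiset.sum_singleton, Multiset.card_singleton]
      rw [hgetlt i h]
      omega
    · rw [hη₀]; simp only [if_neg h, Multiset.sum_zero, Multiset.card_zero]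
      rw [hgetge i (le_of_not_gt h)]
      rfl
  -- Möhle's recursion at L for both arrays
  have h := hM L hL1 hLne
  have h' := hM' L hL1 hLne
  rw [MoehleRec, moehleRHS, hLsum] at h h'
  rw [← hq1eq n (by omega)] at h'
  have hΔ : ∑ K' ∈ collisionSets n, (qc n K' - qc' n K') * innerS p n L K' = 0 := by
    simp only [sub_mul]
    rw [Finset.sum_sub_distrib]
    simp only [innerS]
    linarith [h, h']
  have hKmem : K ∈ collisionSets n := mem_collisionSets.2 ⟨hK0, hK2, hKn⟩
  -- off-diagonal terms vanish
  have hoff : ∀ K' ∈ collisionSets n, K' ≠ K → (qc n K' - qc' n K') * innerS p n L K' = 0 := by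
    intro K' hK' hne
    by_cases hempty : allocations K' L = ∅
    · rw [innerS, hempty, Finset.sum_empty, mul_zero]
    · obtain ⟨η, hη⟩ := Finset.nonempty_iff_ne_empty.2 hempty
      obtain ⟨hK'0, hK'2, hK'n⟩ := mem_collisionSets.1 hK'
      obtain ⟨hηsum, hηle⟩ := mem_allocations.1 hη
      have hη0 : ∀ i : Fin L.length, r ≤ (i : ℕ) → η i = 0 := by
        intro i hi
        by_contra hc
        obtain ⟨x, hx⟩ := Multiset.exists_mem_of_ne_zero hc
        have hxK : x ∈ K' := by
          rw [← hηsum]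
          exact Multiset.mem_of_le
            (Finset.single_le_sum (f := fun i => η i)
              (fun _ _ => Multiset.zero_le _) (Finset.mem_univ i)) hx
        have h1 := hηle i
        rw [hgetge i hi] at h1
        have := le_trans (le_trans (hK'2 x hxK) (Multiset.le_sum_of_mem hx)) h1
        omega
      have hs1 : K'.sum = ∑ i : Fin L.length, (η i).sum := by
        rw [← hηsum, msum_sum]
      have hbound : ∀ i : Fin L.length,
          (η i).sum ≤ (if (i : ℕ) < r then T.getD (i : ℕ) 0 else 0) := by
        intro i
        by_cases hi : (i : ℕ) < r
        · rw [if_pos hi]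
          have h1 := hηle i
          rwa [hgetlt i hi] at h1
        · rw [if_neg hi, hη0 i (le_of_not_gt hi), Multiset.sum_zero]
      have hw : ∑ i : Fin L.length, (if (i : ℕ) < r then T.getD (i : ℕ) 0 else 0) = K.sum := by
        rw [Fin.sum_univ_eq_sum_range (fun j => if j < r then T.getD j 0 else 0) L.length]
        rw [hLlen, Finset.sum_range_add]
        have hz : (∑ j ∈ Finset.range t, if r + j < r then T.getD (r + j) 0 else 0) = 0 :=
          Finset.sum_eq_zero fun j _ => if_neg (by omega)
        rw [hz, add_zero]
        have ho : (∑ j ∈ Finset.range r, if j < r then T.getD j 0 else 0)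
            = ∑ j ∈ Finset.range r, T.getD j 0 :=
          Finset.sum_congr rfl fun j hj => if_pos (Finset.mem_range.1 hj)
        rw [ho, hrdef, sum_getD T, hTsum]
      have hle2 : K'.sum ≤ K.sum := by
        rw [hs1, ← hw]
        exact Finset.sum_le_sum fun i _ => hbound i
      have hmeas : (n + 2) * K'.sum - Multiset.card K' < (n + 2) * K.sum - Multiset.card K := by
        rcases lt_or_eq_of_le hle2 with hlt | heq
        · have hcard1 : 1 ≤ Multiset.card K' := Multiset.card_pos.2 hK'0
          have hmul : (n + 2) * K'.sum + (n + 2) ≤ (n + 2) * K.sum := by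
            calc (n + 2) * K'.sum + (n + 2) = (n + 2) * (K'.sum + 1) := by ring
              _ ≤ (n + 2) * K.sum := Nat.mul_le_mul_left _ hlt
          have hrn : r ≤ n := le_trans hrσ hKn
          omega
        · -- equal sums: exact fill
          have hexact : ∀ i : Fin L.length,
              (η i).sum = (if (i : ℕ) < r then T.getD (i : ℕ) 0 else 0) :=
            fun i => (Finset.sum_eq_sum_iff_of_le fun i _ => hbound i).1
              (by rw [← hs1, heq, hw]) i (Finset.mem_univ i)
          have hcard : Multiset.card K' = ∑ i : Fin L.length, Multiset.card (η i) := by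
            rw [← hηsum, mcard_sum]
          have hcb : ∀ i : Fin L.length,
              (if (i : ℕ) < r then 1 else 0) ≤ Multiset.card (η i) := by
            intro i
            by_cases hi : (i : ℕ) < r
            · rw [if_pos hi]
              refine Nat.one_le_iff_ne_zero.2 ?_
              intro hc0
              have hz := Multiset.card_eq_zero.1 hc0
              have h1 := hexact i
              rw [hz, if_pos hi, Multiset.sum_zero] at h1
              have := hT2' (i : ℕ) hi
              omega
            · rw [if_neg hi]; exact Nat.zero_le _
          have hwr : ∑ i : Fin L.length, (if (i : ℕ) < r then 1 else 0) = r := by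
            rw [Fin.sum_univ_eq_sum_range (fun j => if j < r then 1 else 0) L.length]
            rw [hLlen, Finset.sum_range_add]
            have hz : (∑ j ∈ Finset.range t, if r + j < r then 1 else 0) = 0 :=
              Finset.sum_eq_zero fun j _ => if_neg (by omega)
            rw [hz, add_zero]
            have ho : (∑ j ∈ Finset.range r, if j < r then 1 else 0)
                = ∑ _j ∈ Finset.range r, 1 :=
              Finset.sum_congr rfl fun j hj => if_pos (Finset.mem_range.1 hj)
            rw [ho, Finset.sum_const, Finset.card_range, smul_eq_mul, mul_one]
          have hrcard : r ≤ Multiset.card K' := by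
            rw [hcard, ← hwr]
            exact Finset.sum_le_sum fun i _ => hcb i
          rcases lt_or_eq_of_le hrcard with hc | hc
          · have hK'σ : Multiset.card K' ≤ K'.sum :=
              card_le_msum fun k hk => by have := hK'2 k hk; omega
            have h2σ : 2 * K.sum ≤ (n + 2) * K.sum := Nat.mul_le_mul_right _ (by omega)
            rw [heq] at hK'σ ⊢
            omega
          · -- K' = K, contradiction
            exfalso
            apply hne
            have hceq : ∀ i : Fin L.length,
                (if (i : ℕ) < r then 1 else 0) = Multiset.card (η i) :=
              fun i => (Finset.sum_eq_sum_iff_of_le fun i _ => hcb i).1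
                (by rw [hwr, ← hcard]; exact hc) i (Finset.mem_univ i)
            have hηeq : ∀ i : Fin L.length, η i = η₀ i := by
              intro i
              by_cases hi : (i : ℕ) < r
              · have hc1 : Multiset.card (η i) = 1 := by
                  have := (hceq i).symm
                  rwa [if_pos hi] at this
                obtain ⟨a, ha⟩ := Multiset.card_eq_one.1 hc1
                have hsum' : (η i).sum = T.getD (i : ℕ) 0 := by
                  have := hexact i
                  rwa [if_pos hi] at this
                rw [ha, Multiset.sum_singleton] at hsum'
                rw [ha, hsum', hη₀]
                simp only [if_pos hi]
              · rw [hη0 i (le_of_not_gt hi), hη₀]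
                simp only [if_neg hi]
            rw [← hηsum, ← hη₀K]
            exact Finset.sum_congr rfl fun i _ => hηeq i
      have hIH := IH ((n + 2) * K'.sum - Multiset.card K') (lt_of_lt_of_le hmeas hmK) K'
        le_rfl hK'0 hK'2 hK'n
      rw [hIH, sub_self, zero_mul]
  have hsingle : ∑ K' ∈ collisionSets n, (qc n K' - qc' n K') * innerS p n L K'
      = (qc n K - qc' n K) * innerS p n L K :=
    Finset.sum_eq_single_of_mem K hKmem hoff
  rw [hsingle] at hΔ
  -- the diagonal coefficient is positive
  have hSpos : 0 < innerS p n L K := by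
    rw [innerS]
    apply Finset.sum_pos'
    · intro η _
      apply mul_nonneg _ (hnn _)
      apply le_of_lt
      exact div_pos (Finset.prod_pos fun i _ => dCoef_pos _ _ _) (dCoef_pos _ _ _)
    · refine ⟨η₀, hη₀mem, ?_⟩
      apply mul_pos
      · exact div_pos (Finset.prod_pos fun i _ => dCoef_pos _ _ _) (dCoef_pos _ _ _)
      · rw [harg₀]
        exact hppos L.length
  rcases mul_eq_zero.1 hΔ with hz | hz
  · linarith [hz]
  · exact absurd hz (ne_of_gt hSpos)


/-- The correspondence `q^∞ ↦ p` between infinite consistent arrays with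
`q(2:1) > 0` (satisfying the backward recursions) and the EPPFs solving Möhle's recursion for
all `n` is injective: if two such arrays yield the same EPPF `p`, they coincide (on the
admissible entries). -/
theorem q_to_p_injective (q1 q1' : ℕ → ℝ) (qc qc' : ℕ → Multiset ℕ → ℝ) (p : List ℕ → ℝ)
    (hq1 : ∀ n, 0 ≤ q1 n ∧ q1 n ≤ 1) (hqc : ∀ n K, 0 ≤ qc n K)
    (hq1' : ∀ n, 0 ≤ q1' n ∧ q1' n ≤ 1) (hqc' : ∀ n K, 0 ≤ qc' n K)
    (hqsum : ∀ n : ℕ, 1 ≤ n → q1 n + ∑ K ∈ collisionSets n, qc n K = 1)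
    (hqsum' : ∀ n : ℕ, 1 ≤ n → q1' n + ∑ K ∈ collisionSets n, qc' n K = 1)
    (hcons : GeneralQRec q1 qc) (hcons' : GeneralQRec q1' qc')
    (hq21 : 0 < q1 2) (hq21' : 0 < q1' 2)
    (hnn : ∀ L : List ℕ, 0 ≤ p L)
    (hsymm : ∀ L L' : List ℕ, L.Perm L' → p L = p L')
    (hone : p [1] = 1)
    (hadd : ∀ L : List ℕ, (∀ x ∈ L, 1 ≤ x) → L ≠ [] →
      p L = p (L ++ [1]) + ∑ i ∈ Finset.range L.length, p (L.set i (L.getD i 0 + 1)))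
    (hM : ∀ L : List ℕ, (∀ x ∈ L, 1 ≤ x) → L ≠ [] → MoehleRec q1 qc p L)
    (hM' : ∀ L : List ℕ, (∀ x ∈ L, 1 ≤ x) → L ≠ [] → MoehleRec q1' qc' p L) :
    (∀ n : ℕ, 1 ≤ n → q1 n = q1' n) ∧
    ∀ (n : ℕ) (K : Multiset ℕ), K ≠ 0 → (∀ k ∈ K, 2 ≤ k) → K.sum ≤ n →
      qc n K = qc' n K := by
  have hq1e : ∀ n : ℕ, 1 ≤ n → q1 n = q1' n :=
    q1_eq hq1 hqc hqsum hcons hq21 hnn hone hM hM'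
  exact ⟨hq1e, qc_eq hnn hq1e (p_repl_pos hq1 hqc hqsum hcons hq21 hnn hone hM) hM hM'⟩
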